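/- Let N ∈ ℝ^{d×d} be positive definite, c > 0, and u, v ∈ ℝ^d such that N − c·u uᵀ − c·v vᵀ is positive definite. Then (1 − c·uᵀN⁻¹u)(1 − c·vᵀN⁻¹v) > c²·(uᵀN⁻¹v)². (In the paper's notation, with c copies of x_1 and x_n in the design and the Gram matrix of the remaining rows positive definite: (1 − c·h_11)(1 − c·h_nn) − c²h_1n² > 0.) -/

import Mathlib

open Matrix

/-- Lemma A.2, second inequality: for `N` positive definite,
`c > 0` and `u, v` with `N - c·uuᵀ - c·vvᵀ` positive definite,
`(1 - c·uᵀN⁻¹u)(1 - c·vᵀN⁻¹v) > c²·(uᵀN⁻¹v)²`. -/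
theorem schur_leverage_inequality
    (d : ℕ) (N : Matrix (Fin d) (Fin d) ℝ) (hN : N.PosDef)
    (c : ℝ) (hc : 0 < c) (u v : Fin d → ℝ)
    (hrest : (N - c • vecMulVec u u - c • vecMulVec v v).PosDef) :
    c ^ 2 * (u ⬝ᵥ (N⁻¹ *ᵥ v)) ^ 2 <
      (1 - c * (u ⬝ᵥ (N⁻¹ *ᵥ u))) * (1 - c * (v ⬝ᵥ (N⁻¹ *ᵥ v))) := by
  haveI : Invertible N := hN.isUnit.invertible
  have hs : Real.sqrt c * Real.sqrt c = c := Real.mul_self_sqrt hc.le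
  set s := Real.sqrt c with hs_def
  set C : Matrix (Fin d) (Fin 2) ℝ := Matrix.of (fun i j => s * ![u, v] j i) with hC
  have hCC : N - C * (1 : Matrix (Fin 2) (Fin 2) ℝ)⁻¹ * Cᴴ
      = N - c • vecMulVec u u - c • vecMulVec v v := by
    rw [inv_one, Matrix.mul_one]
    ext i k
    simp only [Matrix.sub_apply, mul_apply, conjTranspose_apply, hC, of_apply, Fin.sum_univ_two,
      Matrix.smul_apply, vecMulVec_apply, smul_eq_mul, Matrix.cons_val_zero, Matrix.cons_val_one,
      Matrix.head_cons, star_trivial]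
    linear_combination (-(u i * u k + v i * v k)) * hs
  haveI : Invertible (1 : Matrix (Fin 2) (Fin 2) ℝ) := invertibleOne
  have hM : (fromBlocks N C Cᴴ (1 : Matrix (Fin 2) (Fin 2) ℝ)).PosSemidef := by
    rw [PosDef.fromBlocks₂₂ N C Matrix.PosDef.one, hCC]
    exact hrest.posSemidef
  have hS : ((1 : Matrix (Fin 2) (Fin 2) ℝ) - Cᴴ * N⁻¹ * C).PosSemidef :=
    (PosDef.fromBlocks₁₁ C 1 hN).mp hM
  set S : Matrix (Fin 2) (Fin 2) ℝ := 1 - Cᴴ * N⁻¹ * C with hSdef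
  have hSpd : S.PosDef := by
    refine posDef_iff_dotProduct_mulVec.mpr ⟨hS.1, fun x hx => ?_⟩
    rcases (hS.dotProduct_mulVec_nonneg x).lt_or_eq with h | h
    · simpa using h
    · exfalso
      have hSx : S *ᵥ x = 0 := (hS.dotProduct_mulVec_zero_iff x).mp h.symm
      have hfix : (Cᴴ * N⁻¹ * C) *ᵥ x = x := by
        have := hSx
        rw [hSdef, sub_mulVec, one_mulVec, sub_eq_zero] at this
        exact this.symm
      set w : Fin d → ℝ := N⁻¹ *ᵥ (C *ᵥ x) with hw
      have hNw : N *ᵥ w = C *ᵥ x := by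
        rw [hw, mulVec_mulVec, Matrix.mul_inv_of_invertible, one_mulVec]
      have hCw : Cᴴ *ᵥ w = x := by
        have h2 : Cᴴ *ᵥ w = (Cᴴ * N⁻¹ * C) *ᵥ x := by
          simp [hw, mulVec_mulVec, Matrix.mul_assoc]
        rw [h2, hfix]
      have hw0 : w ≠ 0 := by
        intro h0
        apply hx
        rw [← hCw, h0, mulVec_zero]
      have hrest' : (N - C * (1 : Matrix (Fin 2) (Fin 2) ℝ)⁻¹ * Cᴴ).PosDef := by
        rw [hCC]; exact hrest
      have hz : (N - C * (1 : Matrix (Fin 2) (Fin 2) ℝ)⁻¹ * Cᴴ) *ᵥ w = 0 := by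
        rw [inv_one, Matrix.mul_one, sub_mulVec, hNw, ← mulVec_mulVec, hCw, sub_self]
      have hcontra := hrest'.dotProduct_mulVec_pos hw0
      rw [hz, dotProduct_zero] at hcontra
      exact lt_irrefl 0 hcontra
  have htr : N⁻¹ᵀ = N⁻¹ := by
    ext i j
    have := congrFun (congrFun hN.1.inv.eq i) j
    simpa using this
  have h1 : v ᵥ* N⁻¹ = N⁻¹ *ᵥ v := by rw [← htr, vecMul_transpose, htr]
  have hsym : v ⬝ᵥ N⁻¹ *ᵥ u = u ⬝ᵥ N⁻¹ *ᵥ v := by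
    rw [dotProduct_mulVec, h1, dotProduct_comm]
  have key : ∀ j k : Fin 2, (Cᴴ * N⁻¹ * C) j k = c * ((![u, v] j) ⬝ᵥ N⁻¹ *ᵥ (![u, v] k)) := by
    intro j k
    simp only [mul_apply, conjTranspose_apply, hC, of_apply, dotProduct, mulVec,
      Finset.mul_sum, Finset.sum_mul, star_trivial]
    rw [Finset.sum_comm]
    refine Finset.sum_congr rfl fun i _ => Finset.sum_congr rfl fun l _ => ?_
    linear_combination (![u, v] j i * N⁻¹ i l * ![u, v] k l) * hs
  have hdet := hSpd.det_pos
  rw [det_fin_two] at hdet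
  have e00 : S 0 0 = 1 - c * (u ⬝ᵥ N⁻¹ *ᵥ u) := by
    simp only [hSdef, Matrix.sub_apply, one_apply_eq, key 0 0]
    simp
  have e11 : S 1 1 = 1 - c * (v ⬝ᵥ N⁻¹ *ᵥ v) := by
    simp only [hSdef, Matrix.sub_apply, one_apply_eq, key 1 1]
    simp
  have e01 : S 0 1 = - (c * (u ⬝ᵥ N⁻¹ *ᵥ v)) := by
    simp only [hSdef, Matrix.sub_apply, key 0 1]
    simp [one_apply]
  have e10 : S 1 0 = - (c * (u ⬝ᵥ N⁻¹ *ᵥ v)) := by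
    simp only [hSdef, Matrix.sub_apply, key 1 0]
    simp [one_apply, hsym]
  rw [e00, e11, e01, e10] at hdet
  nlinarith [hdet]
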